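/- Let m, g, ρ, S, δ, W₀, C_L, C_{D0}, K be positive real constants. On the open set U = {(x,y,z,V,γ,ψ,φ) ∈ ℝ⁷ : V > 0 and cos γ ≠ 0}, let f be the dynamic soaring drift vector field f = ( V cos γ cos ψ, V cos γ sin ψ − W(z), V sin γ, (−D(V) − m g sin γ + m Ẇ cos γ sin ψ)/m, (L(V) cos φ − m g cos γ − m Ẇ sin γ sin ψ)/(m V), (L(V) sin φ + m Ẇ cos ψ)/(m V cos γ), 0 ) with L(V) = ½ρV²S C_L, D(V) = ½ρV²S(C_{D0}+K C_L²), W(z) = W₀/(1+e^{−z/δ}), Ẇ = W₀e^{−z/δ}V sin γ/(δ(1+e^{−z/δ})²), and let b = (0,0,0,0,0,0,1). Then the first three components of the iterated Lie bracket [f,[f,b]] at every point of U are: (L(V)/m)(cos ψ sin γ sin φ − cos φ sin ψ), (L(V)/m)(cos φ cos ψ + sin γ sin φ sin ψ), and −(L(V)/m) cos γ sin φ; in particular the position part of [f,[f,b]] does not vanish whenever L(V) ≠ 0. -/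

import Mathlib

/-- The dynamic soaring drift vector field on the state
`p = (x, y, z, V, γ, ψ, φ) ∈ ℝ⁷`, with lift `L(V) = ½ρV²S C_L`,
drag `D(V) = ½ρV²S(C_{D0}+K C_L²)`, logistic wind `W(z) = W₀/(1+e^{−z/δ})`
and wind gradient `Ẇ = W₀ e^{−z/δ} V sin γ/(δ(1+e^{−z/δ})²)`. -/
noncomputable def dsDrift (m g ρ S δ W₀ CL CD0 K : ℝ) (p : Fin 7 → ℝ) : Fin 7 → ℝ :=
  ![p 3 * Real.cos (p 4) * Real.cos (p 5),
    p 3 * Real.cos (p 4) * Real.sin (p 5) - W₀ / (1 + Real.exp (-(p 2) / δ)),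
    p 3 * Real.sin (p 4),
    (-(1 / 2 * ρ * (p 3) ^ 2 * S * (CD0 + K * CL ^ 2)) - m * g * Real.sin (p 4)
        + m * (W₀ * Real.exp (-(p 2) / δ) * p 3 * Real.sin (p 4)
            / (δ * (1 + Real.exp (-(p 2) / δ)) ^ 2)) * Real.cos (p 4) * Real.sin (p 5)) / m,
    (1 / 2 * ρ * (p 3) ^ 2 * S * CL * Real.cos (p 6) - m * g * Real.cos (p 4)
        - m * (W₀ * Real.exp (-(p 2) / δ) * p 3 * Real.sin (p 4)
            / (δ * (1 + Real.exp (-(p 2) / δ)) ^ 2)) * Real.sin (p 4) * Real.sin (p 5))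
      / (m * p 3),
    (1 / 2 * ρ * (p 3) ^ 2 * S * CL * Real.sin (p 6)
        + m * (W₀ * Real.exp (-(p 2) / δ) * p 3 * Real.sin (p 4)
            / (δ * (1 + Real.exp (-(p 2) / δ)) ^ 2)) * Real.cos (p 5))
      / (m * p 3 * Real.cos (p 4)),
    0]



noncomputable def dsG (m ρ S CL : ℝ) (x : Fin 7 → ℝ) : Fin 7 → ℝ :=
  ![0, 0, 0, 0,
    1 / 2 * ρ * (x 3) ^ 2 * S * CL * Real.sin (x 6) / (m * x 3),
    -(1 / 2 * ρ * (x 3) ^ 2 * S * CL * Real.cos (x 6)) / (m * x 3 * Real.cos (x 4)),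
    0]

private lemma fderiv_line {f : (Fin 7 → ℝ) → ℝ} {x v : Fin 7 → ℝ} {d : ℝ}
    (hf : DifferentiableAt ℝ f x) (h : HasDerivAt (fun t : ℝ => f (x + t • v)) d 0) :
    fderiv ℝ f x v = d := (hf.hasFDerivAt.hasLineDerivAt v).unique h

private lemma fderiv_comp_pi {F : (Fin 7 → ℝ) → (Fin 7 → ℝ)} {x v : Fin 7 → ℝ}
    (h : ∀ i, DifferentiableAt ℝ (fun y => F y i) x) (i : Fin 7) :
    fderiv ℝ F x v i = fderiv ℝ (fun y => F y i) x v := by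
  rw [fderiv_pi h]; rfl

section

variable {m g ρ S δ W₀ CL CD0 K : ℝ}

private lemma dsDrift_diff (hm : m ≠ 0) (hδ : δ ≠ 0) {x : Fin 7 → ℝ}
    (hx : x 3 ≠ 0) (hγ : Real.cos (x 4) ≠ 0) (i : Fin 7) :
    DifferentiableAt ℝ (fun y => dsDrift m g ρ S δ W₀ CL CD0 K y i) x := by
  have hA : ∀ y : Fin 7 → ℝ, (1 : ℝ) + Real.exp (-y 2 / δ) ≠ 0 := fun y => by positivity
  have hB : δ * (1 + Real.exp (-x 2 / δ)) ^ 2 ≠ 0 := by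
    have : (0:ℝ) < (1 + Real.exp (-x 2 / δ)) ^ 2 := by positivity
    exact mul_ne_zero hδ (ne_of_gt this)
  have hC : m * x 3 ≠ 0 := mul_ne_zero hm hx
  have hD : m * x 3 * Real.cos (x 4) ≠ 0 := mul_ne_zero hC hγ
  have hAx := hA x
  fin_cases i
  · show DifferentiableAt ℝ
      (fun y : Fin 7 → ℝ => y 3 * Real.cos (y 4) * Real.cos (y 5)) x
    fun_prop
  · show DifferentiableAt ℝ
      (fun y : Fin 7 → ℝ => y 3 * Real.cos (y 4) * Real.sin (y 5)
        - W₀ / (1 + Real.exp (-(y 2) / δ))) x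
    simp only [div_eq_mul_inv]
    fun_prop (disch := assumption)
  · show DifferentiableAt ℝ (fun y : Fin 7 → ℝ => y 3 * Real.sin (y 4)) x
    fun_prop
  · show DifferentiableAt ℝ
      (fun y : Fin 7 → ℝ =>
        (-(1 / 2 * ρ * (y 3) ^ 2 * S * (CD0 + K * CL ^ 2)) - m * g * Real.sin (y 4)
          + m * (W₀ * Real.exp (-(y 2) / δ) * y 3 * Real.sin (y 4)
              / (δ * (1 + Real.exp (-(y 2) / δ)) ^ 2)) * Real.cos (y 4) * Real.sin (y 5)) / m) x
    simp only [div_eq_mul_inv]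
    fun_prop (disch := assumption)
  · show DifferentiableAt ℝ
      (fun y : Fin 7 → ℝ =>
        (1 / 2 * ρ * (y 3) ^ 2 * S * CL * Real.cos (y 6) - m * g * Real.cos (y 4)
          - m * (W₀ * Real.exp (-(y 2) / δ) * y 3 * Real.sin (y 4)
              / (δ * (1 + Real.exp (-(y 2) / δ)) ^ 2)) * Real.sin (y 4) * Real.sin (y 5))
          / (m * y 3)) x
    simp only [div_eq_mul_inv]
    fun_prop (disch := assumption)
  · show DifferentiableAt ℝ
      (fun y : Fin 7 → ℝ =>
        (1 / 2 * ρ * (y 3) ^ 2 * S * CL * Real.sin (y 6)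
          + m * (W₀ * Real.exp (-(y 2) / δ) * y 3 * Real.sin (y 4)
              / (δ * (1 + Real.exp (-(y 2) / δ)) ^ 2)) * Real.cos (y 5))
          / (m * y 3 * Real.cos (y 4))) x
    simp only [div_eq_mul_inv]
    fun_prop (disch := assumption)
  · show DifferentiableAt ℝ (fun _ : Fin 7 → ℝ => (0:ℝ)) x
    fun_prop

private lemma dsG_diff (hm : m ≠ 0) {x : Fin 7 → ℝ}
    (hx : x 3 ≠ 0) (hγ : Real.cos (x 4) ≠ 0) (i : Fin 7) :
    DifferentiableAt ℝ (fun y => dsG m ρ S CL y i) x := by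
  have hC : m * x 3 ≠ 0 := mul_ne_zero hm hx
  have hD : m * x 3 * Real.cos (x 4) ≠ 0 := mul_ne_zero hC hγ
  fin_cases i
  · exact differentiableAt_const 0
  · exact differentiableAt_const 0
  · exact differentiableAt_const 0
  · exact differentiableAt_const 0
  · show DifferentiableAt ℝ
      (fun y : Fin 7 → ℝ => 1 / 2 * ρ * (y 3) ^ 2 * S * CL * Real.sin (y 6) / (m * y 3)) x
    simp only [div_eq_mul_inv]
    fun_prop (disch := assumption)
  · show DifferentiableAt ℝ
      (fun y : Fin 7 → ℝ =>
        -(1 / 2 * ρ * (y 3) ^ 2 * S * CL * Real.cos (y 6)) / (m * y 3 * Real.cos (y 4))) x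
    simp only [div_eq_mul_inv]
    fun_prop (disch := assumption)
  · exact differentiableAt_const 0

private lemma inner_bracket (hm : m ≠ 0) (hδ : δ ≠ 0) {x : Fin 7 → ℝ}
    (hx : x 3 ≠ 0) (hγ : Real.cos (x 4) ≠ 0) :
    VectorField.lieBracket ℝ (dsDrift m g ρ S δ W₀ CL CD0 K)
      (fun _ : Fin 7 → ℝ => ![0, 0, 0, 0, 0, 0, 1]) x = dsG m ρ S CL x := by
  have hdiff := dsDrift_diff hm hδ hx hγ (m := m) (g := g) (ρ := ρ) (S := S) (W₀ := W₀)
    (CL := CL) (CD0 := CD0) (K := K)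
  have hb : fderiv ℝ (fun _ : Fin 7 → ℝ => (![0, 0, 0, 0, 0, 0, 1] : Fin 7 → ℝ)) x = 0 :=
    fderiv_const_apply _
  set v : Fin 7 → ℝ := ![0, 0, 0, 0, 0, 0, 1] with hv
  have hcoord : ∀ t : ℝ, ∀ j : Fin 7, (x + t • v) j = x j + t * v j := fun t j => rfl
  funext i
  have : VectorField.lieBracket ℝ (dsDrift m g ρ S δ W₀ CL CD0 K)
      (fun _ : Fin 7 → ℝ => v) x i
      = - fderiv ℝ (fun y => dsDrift m g ρ S δ W₀ CL CD0 K y i) x v := by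
    rw [VectorField.lieBracket, ← fderiv_comp_pi hdiff i]
    simp [hb]
  rw [this]
  have h6 : ∀ t : ℝ, (x + t • v) 6 = x 6 + t := fun t => by
    rw [hcoord t 6, show v 6 = 1 from rfl, mul_one]
  have h0 : ∀ t : ℝ, (x + t • v) 0 = x 0 := fun t => by
    rw [hcoord t 0, show v 0 = 0 from rfl, mul_zero, add_zero]
  have h1 : ∀ t : ℝ, (x + t • v) 1 = x 1 := fun t => by
    rw [hcoord t 1, show v 1 = 0 from rfl, mul_zero, add_zero]
  have h2 : ∀ t : ℝ, (x + t • v) 2 = x 2 := fun t => by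
    rw [hcoord t 2, show v 2 = 0 from rfl, mul_zero, add_zero]
  have h3 : ∀ t : ℝ, (x + t • v) 3 = x 3 := fun t => by
    rw [hcoord t 3, show v 3 = 0 from rfl, mul_zero, add_zero]
  have h4 : ∀ t : ℝ, (x + t • v) 4 = x 4 := fun t => by
    rw [hcoord t 4, show v 4 = 0 from rfl, mul_zero, add_zero]
  have h5 : ∀ t : ℝ, (x + t • v) 5 = x 5 := fun t => by
    rw [hcoord t 5, show v 5 = 0 from rfl, mul_zero, add_zero]
  fin_cases i
  · show -(fderiv ℝ (fun y => dsDrift m g ρ S δ W₀ CL CD0 K y 0) x) v = dsG m ρ S CL x 0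
    rw [fderiv_line (hdiff 0) (d := 0) ?_, neg_zero]
    · show dsG m ρ S CL x 0 = 0; rfl
    · show HasDerivAt (fun t : ℝ =>
        (x + t • v) 3 * Real.cos ((x + t • v) 4) * Real.cos ((x + t • v) 5)) 0 0
      simp only [h3, h4, h5]; exact hasDerivAt_const 0 _
  · show -(fderiv ℝ (fun y => dsDrift m g ρ S δ W₀ CL CD0 K y 1) x) v = dsG m ρ S CL x 1
    rw [fderiv_line (hdiff 1) (d := 0) ?_, neg_zero]
    · show dsG m ρ S CL x 1 = 0; rfl
    · show HasDerivAt (fun t : ℝ =>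
        (x + t • v) 3 * Real.cos ((x + t • v) 4) * Real.sin ((x + t • v) 5)
          - W₀ / (1 + Real.exp (-((x + t • v) 2) / δ))) 0 0
      simp only [h2, h3, h4, h5]; exact hasDerivAt_const 0 _
  · show -(fderiv ℝ (fun y => dsDrift m g ρ S δ W₀ CL CD0 K y 2) x) v = dsG m ρ S CL x 2
    rw [fderiv_line (hdiff 2) (d := 0) ?_, neg_zero]
    · show dsG m ρ S CL x 2 = 0; rfl
    · show HasDerivAt (fun t : ℝ =>
        (x + t • v) 3 * Real.sin ((x + t • v) 4)) 0 0
      simp only [h3, h4]; exact hasDerivAt_const 0 _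
  · show -(fderiv ℝ (fun y => dsDrift m g ρ S δ W₀ CL CD0 K y 3) x) v = dsG m ρ S CL x 3
    rw [fderiv_line (hdiff 3) (d := 0) ?_, neg_zero]
    · show dsG m ρ S CL x 3 = 0; rfl
    · show HasDerivAt (fun t : ℝ =>
        (-(1 / 2 * ρ * ((x + t • v) 3) ^ 2 * S * (CD0 + K * CL ^ 2))
          - m * g * Real.sin ((x + t • v) 4)
          + m * (W₀ * Real.exp (-((x + t • v) 2) / δ) * (x + t • v) 3
                * Real.sin ((x + t • v) 4)
              / (δ * (1 + Real.exp (-((x + t • v) 2) / δ)) ^ 2))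
            * Real.cos ((x + t • v) 4) * Real.sin ((x + t • v) 5)) / m) 0 0
      simp only [h2, h3, h4, h5]; exact hasDerivAt_const 0 _
  · show -(fderiv ℝ (fun y => dsDrift m g ρ S δ W₀ CL CD0 K y 4) x) v = dsG m ρ S CL x 4
    rw [fderiv_line (hdiff 4)
      (d := 1 / 2 * ρ * (x 3) ^ 2 * S * CL * (-Real.sin (x 6 + 0) * 1) / (m * x 3)) ?_]
    · show -(1 / 2 * ρ * (x 3) ^ 2 * S * CL * (-Real.sin (x 6 + 0) * 1) / (m * x 3))
        = 1 / 2 * ρ * (x 3) ^ 2 * S * CL * Real.sin (x 6) / (m * x 3)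
      rw [add_zero]; ring
    · show HasDerivAt (fun t : ℝ =>
        (1 / 2 * ρ * ((x + t • v) 3) ^ 2 * S * CL * Real.cos ((x + t • v) 6)
          - m * g * Real.cos ((x + t • v) 4)
          - m * (W₀ * Real.exp (-((x + t • v) 2) / δ) * (x + t • v) 3
                * Real.sin ((x + t • v) 4)
              / (δ * (1 + Real.exp (-((x + t • v) 2) / δ)) ^ 2))
            * Real.sin ((x + t • v) 4) * Real.sin ((x + t • v) 5)) / (m * (x + t • v) 3)) _ 0
      simp only [h2, h3, h4, h5, h6]
      exact (((((hasDerivAt_id (0:ℝ)).const_add (x 6)).cos).const_mul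
        (1 / 2 * ρ * (x 3) ^ 2 * S * CL)).sub_const _ |>.sub_const _ |>.div_const _)
  · show -(fderiv ℝ (fun y => dsDrift m g ρ S δ W₀ CL CD0 K y 5) x) v = dsG m ρ S CL x 5
    rw [fderiv_line (hdiff 5)
      (d := 1 / 2 * ρ * (x 3) ^ 2 * S * CL * (Real.cos (x 6 + 0) * 1)
        / (m * x 3 * Real.cos (x 4))) ?_]
    · show -(1 / 2 * ρ * (x 3) ^ 2 * S * CL * (Real.cos (x 6 + 0) * 1)
            / (m * x 3 * Real.cos (x 4)))
        = -(1 / 2 * ρ * (x 3) ^ 2 * S * CL * Real.cos (x 6)) / (m * x 3 * Real.cos (x 4))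
      rw [add_zero]; ring
    · show HasDerivAt (fun t : ℝ =>
        (1 / 2 * ρ * ((x + t • v) 3) ^ 2 * S * CL * Real.sin ((x + t • v) 6)
          + m * (W₀ * Real.exp (-((x + t • v) 2) / δ) * (x + t • v) 3
                * Real.sin ((x + t • v) 4)
              / (δ * (1 + Real.exp (-((x + t • v) 2) / δ)) ^ 2))
            * Real.cos ((x + t • v) 5))
          / (m * (x + t • v) 3 * Real.cos ((x + t • v) 4))) _ 0
      simp only [h2, h3, h4, h5, h6]
      exact (((((hasDerivAt_id (0:ℝ)).const_add (x 6)).sin).const_mul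
        (1 / 2 * ρ * (x 3) ^ 2 * S * CL)).add_const _ |>.div_const _)
  · show -(fderiv ℝ (fun y => dsDrift m g ρ S δ W₀ CL CD0 K y 6) x) v = dsG m ρ S CL x 6
    rw [fderiv_line (hdiff 6) (d := 0) ?_, neg_zero]
    · show dsG m ρ S CL x 6 = 0; rfl
    · show HasDerivAt (fun _ : ℝ => (0:ℝ)) 0 0
      exact hasDerivAt_const 0 _

end

private lemma ds_open : IsOpen {y : Fin 7 → ℝ | y 3 ≠ 0 ∧ Real.cos (y 4) ≠ 0} := by
  have h1 : IsOpen {y : Fin 7 → ℝ | y 3 ≠ 0} :=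
    isOpen_compl_singleton.preimage (continuous_apply 3)
  have h2 : IsOpen {y : Fin 7 → ℝ | Real.cos (y 4) ≠ 0} :=
    isOpen_compl_singleton.preimage (Real.continuous_cos.comp (continuous_apply 4))
  exact h1.inter h2

/-- On the open set `{V > 0, cos γ ≠ 0}`, the first three (position) components of the
iterated Lie bracket `[f,[f,b]]` of the dynamic soaring drift `f` and roll control field
`b = e₇` are `(L/m)(cos ψ sin γ sin φ − cos φ sin ψ)`,
`(L/m)(cos φ cos ψ + sin γ sin φ sin ψ)` and `−(L/m) cos γ sin φ`; in particular the
position part of `[f,[f,b]]` does not vanish whenever `L(V) ≠ 0`. -/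
theorem ds_lieBracket_ffb (m g ρ S δ W₀ CL CD0 K : ℝ)
    (hm : 0 < m) (hg : 0 < g) (hρ : 0 < ρ) (hS : 0 < S) (hδ : 0 < δ)
    (hW₀ : 0 < W₀) (hCL : 0 < CL) (hCD0 : 0 < CD0) (hK : 0 < K)
    (p : Fin 7 → ℝ) (hV : 0 < p 3) (hγ : Real.cos (p 4) ≠ 0) :
    (VectorField.lieBracket ℝ (dsDrift m g ρ S δ W₀ CL CD0 K)
        (VectorField.lieBracket ℝ (dsDrift m g ρ S δ W₀ CL CD0 K)
          (fun _ : Fin 7 → ℝ => ![0, 0, 0, 0, 0, 0, 1])) p 0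
      = (1 / 2 * ρ * (p 3) ^ 2 * S * CL / m)
          * (Real.cos (p 5) * Real.sin (p 4) * Real.sin (p 6)
              - Real.cos (p 6) * Real.sin (p 5))) ∧
    (VectorField.lieBracket ℝ (dsDrift m g ρ S δ W₀ CL CD0 K)
        (VectorField.lieBracket ℝ (dsDrift m g ρ S δ W₀ CL CD0 K)
          (fun _ : Fin 7 → ℝ => ![0, 0, 0, 0, 0, 0, 1])) p 1
      = (1 / 2 * ρ * (p 3) ^ 2 * S * CL / m)
          * (Real.cos (p 6) * Real.cos (p 5)
              + Real.sin (p 4) * Real.sin (p 6) * Real.sin (p 5))) ∧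
    (VectorField.lieBracket ℝ (dsDrift m g ρ S δ W₀ CL CD0 K)
        (VectorField.lieBracket ℝ (dsDrift m g ρ S δ W₀ CL CD0 K)
          (fun _ : Fin 7 → ℝ => ![0, 0, 0, 0, 0, 0, 1])) p 2
      = -(1 / 2 * ρ * (p 3) ^ 2 * S * CL / m) * Real.cos (p 4) * Real.sin (p 6)) ∧
    (1 / 2 * ρ * (p 3) ^ 2 * S * CL ≠ 0 →
      (![VectorField.lieBracket ℝ (dsDrift m g ρ S δ W₀ CL CD0 K)
            (VectorField.lieBracket ℝ (dsDrift m g ρ S δ W₀ CL CD0 K)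
              (fun _ : Fin 7 → ℝ => ![0, 0, 0, 0, 0, 0, 1])) p 0,
          VectorField.lieBracket ℝ (dsDrift m g ρ S δ W₀ CL CD0 K)
            (VectorField.lieBracket ℝ (dsDrift m g ρ S δ W₀ CL CD0 K)
              (fun _ : Fin 7 → ℝ => ![0, 0, 0, 0, 0, 0, 1])) p 1,
          VectorField.lieBracket ℝ (dsDrift m g ρ S δ W₀ CL CD0 K)
            (VectorField.lieBracket ℝ (dsDrift m g ρ S δ W₀ CL CD0 K)
              (fun _ : Fin 7 → ℝ => ![0, 0, 0, 0, 0, 0, 1])) p 2] : Fin 3 → ℝ) ≠ 0) := by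
  have hm' : m ≠ 0 := ne_of_gt hm
  have hδ' : δ ≠ 0 := ne_of_gt hδ
  have hx3 : p 3 ≠ 0 := ne_of_gt hV
  have hdiff := dsDrift_diff (m := m) (g := g) (ρ := ρ) (S := S) (δ := δ) (W₀ := W₀)
    (CL := CL) (CD0 := CD0) (K := K) hm' hδ' hx3 hγ
  have hGdiff := dsG_diff (m := m) (ρ := ρ) (S := S) (CL := CL) hm' hx3 hγ
  have hmem : {y : Fin 7 → ℝ | y 3 ≠ 0 ∧ Real.cos (y 4) ≠ 0} ∈ nhds p :=
    ds_open.mem_nhds ⟨hx3, hγ⟩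
  have hev : VectorField.lieBracket ℝ (dsDrift m g ρ S δ W₀ CL CD0 K)
      (fun _ : Fin 7 → ℝ => ![0, 0, 0, 0, 0, 0, 1]) =ᶠ[nhds p] dsG m ρ S CL :=
    Filter.eventuallyEq_of_mem hmem (fun y hy => inner_bracket hm' hδ' hy.1 hy.2)
  have hfd : fderiv ℝ (VectorField.lieBracket ℝ (dsDrift m g ρ S δ W₀ CL CD0 K)
      (fun _ : Fin 7 → ℝ => ![0, 0, 0, 0, 0, 0, 1])) p = fderiv ℝ (dsG m ρ S CL) p :=
    hev.fderiv_eq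
  have hval : VectorField.lieBracket ℝ (dsDrift m g ρ S δ W₀ CL CD0 K)
      (fun _ : Fin 7 → ℝ => ![0, 0, 0, 0, 0, 0, 1]) p = dsG m ρ S CL p :=
    inner_bracket hm' hδ' hx3 hγ
  set v : Fin 7 → ℝ := dsG m ρ S CL p with hvdef
  have key : ∀ i : Fin 7,
      VectorField.lieBracket ℝ (dsDrift m g ρ S δ W₀ CL CD0 K)
        (VectorField.lieBracket ℝ (dsDrift m g ρ S δ W₀ CL CD0 K)
          (fun _ : Fin 7 → ℝ => ![0, 0, 0, 0, 0, 0, 1])) p i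
      = fderiv ℝ (fun y => dsG m ρ S CL y i) p (dsDrift m g ρ S δ W₀ CL CD0 K p)
        - fderiv ℝ (fun y => dsDrift m g ρ S δ W₀ CL CD0 K y i) p v := by
    intro i
    have hrfl : VectorField.lieBracket ℝ (dsDrift m g ρ S δ W₀ CL CD0 K)
        (VectorField.lieBracket ℝ (dsDrift m g ρ S δ W₀ CL CD0 K)
          (fun _ : Fin 7 → ℝ => ![0, 0, 0, 0, 0, 0, 1])) p i
        = fderiv ℝ (VectorField.lieBracket ℝ (dsDrift m g ρ S δ W₀ CL CD0 K)
            (fun _ : Fin 7 → ℝ => ![0, 0, 0, 0, 0, 0, 1])) p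
              (dsDrift m g ρ S δ W₀ CL CD0 K p) i
          - fderiv ℝ (dsDrift m g ρ S δ W₀ CL CD0 K) p
              (VectorField.lieBracket ℝ (dsDrift m g ρ S δ W₀ CL CD0 K)
                (fun _ : Fin 7 → ℝ => ![0, 0, 0, 0, 0, 0, 1]) p) i := rfl
    rw [hrfl, hfd, hval, fderiv_comp_pi hGdiff i, fderiv_comp_pi hdiff i]
  have hz0 : fderiv ℝ (fun y => dsG m ρ S CL y 0) p (dsDrift m g ρ S δ W₀ CL CD0 K p) = 0 := by
    rw [show (fun y : Fin 7 → ℝ => dsG m ρ S CL y 0) = fun _ => (0:ℝ) from rfl,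
      fderiv_const_apply]; rfl
  have hz1 : fderiv ℝ (fun y => dsG m ρ S CL y 1) p (dsDrift m g ρ S δ W₀ CL CD0 K p) = 0 := by
    rw [show (fun y : Fin 7 → ℝ => dsG m ρ S CL y 1) = fun _ => (0:ℝ) from rfl,
      fderiv_const_apply]; rfl
  have hz2 : fderiv ℝ (fun y => dsG m ρ S CL y 2) p (dsDrift m g ρ S δ W₀ CL CD0 K p) = 0 := by
    rw [show (fun y : Fin 7 → ℝ => dsG m ρ S CL y 2) = fun _ => (0:ℝ) from rfl,
      fderiv_const_apply]; rfl
  -- coordinates along the line p + t • v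
  have hcoord : ∀ t : ℝ, ∀ j : Fin 7, (p + t • v) j = p j + t * v j := fun t j => rfl
  have h0 : ∀ t : ℝ, (p + t • v) 0 = p 0 := fun t => by
    rw [hcoord t 0, show v 0 = 0 from rfl, mul_zero, add_zero]
  have h1 : ∀ t : ℝ, (p + t • v) 1 = p 1 := fun t => by
    rw [hcoord t 1, show v 1 = 0 from rfl, mul_zero, add_zero]
  have h2 : ∀ t : ℝ, (p + t • v) 2 = p 2 := fun t => by
    rw [hcoord t 2, show v 2 = 0 from rfl, mul_zero, add_zero]
  have h3 : ∀ t : ℝ, (p + t • v) 3 = p 3 := fun t => by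
    rw [hcoord t 3, show v 3 = 0 from rfl, mul_zero, add_zero]
  have h4 : ∀ t : ℝ, (p + t • v) 4 = p 4 + t * v 4 := fun t => rfl
  have h5 : ∀ t : ℝ, (p + t • v) 5 = p 5 + t * v 5 := fun t => rfl
  have h4lin : HasDerivAt (fun t : ℝ => p 4 + t * v 4) (v 4) 0 :=
    (hasDerivAt_mul_const _).const_add _
  have h5lin : HasDerivAt (fun t : ℝ => p 5 + t * v 5) (v 5) 0 :=
    (hasDerivAt_mul_const _).const_add _
  have hv4 : v 4 = 1 / 2 * ρ * (p 3) ^ 2 * S * CL * Real.sin (p 6) / (m * p 3) := rfl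
  have hv5 : v 5 = -(1 / 2 * ρ * (p 3) ^ 2 * S * CL * Real.cos (p 6))
      / (m * p 3 * Real.cos (p 4)) := rfl
  -- the three directional derivatives
  have hd0 : fderiv ℝ (fun y => dsDrift m g ρ S δ W₀ CL CD0 K y 0) p v
      = p 3 * (-Real.sin (p 4 + 0 * v 4) * v 4) * Real.cos (p 5 + 0 * v 5)
        + p 3 * Real.cos (p 4 + 0 * v 4) * (-Real.sin (p 5 + 0 * v 5) * v 5) := by
    refine fderiv_line (hdiff 0) ?_
    show HasDerivAt (fun t : ℝ =>
      (p + t • v) 3 * Real.cos ((p + t • v) 4) * Real.cos ((p + t • v) 5)) _ 0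
    simp only [h3, h4, h5]
    exact ((h4lin.cos).const_mul (p 3)).mul (h5lin.cos)
  have hd1 : fderiv ℝ (fun y => dsDrift m g ρ S δ W₀ CL CD0 K y 1) p v
      = p 3 * (-Real.sin (p 4 + 0 * v 4) * v 4) * Real.sin (p 5 + 0 * v 5)
        + p 3 * Real.cos (p 4 + 0 * v 4) * (Real.cos (p 5 + 0 * v 5) * v 5) := by
    refine fderiv_line (hdiff 1) ?_
    show HasDerivAt (fun t : ℝ =>
      (p + t • v) 3 * Real.cos ((p + t • v) 4) * Real.sin ((p + t • v) 5)
        - W₀ / (1 + Real.exp (-((p + t • v) 2) / δ))) _ 0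
    simp only [h2, h3, h4, h5]
    exact ((((h4lin.cos).const_mul (p 3)).mul (h5lin.sin)).sub_const _)
  have hd2 : fderiv ℝ (fun y => dsDrift m g ρ S δ W₀ CL CD0 K y 2) p v
      = p 3 * (Real.cos (p 4 + 0 * v 4) * v 4) := by
    refine fderiv_line (hdiff 2) ?_
    show HasDerivAt (fun t : ℝ => (p + t • v) 3 * Real.sin ((p + t • v) 4)) _ 0
    simp only [h3, h4]
    exact (h4lin.sin).const_mul (p 3)
  have E0 : VectorField.lieBracket ℝ (dsDrift m g ρ S δ W₀ CL CD0 K)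
      (VectorField.lieBracket ℝ (dsDrift m g ρ S δ W₀ CL CD0 K)
        (fun _ : Fin 7 → ℝ => ![0, 0, 0, 0, 0, 0, 1])) p 0
      = (1 / 2 * ρ * (p 3) ^ 2 * S * CL / m)
          * (Real.cos (p 5) * Real.sin (p 4) * Real.sin (p 6)
              - Real.cos (p 6) * Real.sin (p 5)) := by
    rw [key 0, hz0, hd0, hv4, hv5, zero_mul, add_zero, zero_sub]
    simp only [zero_mul, add_zero]
    field_simp
    ring
  have E1 : VectorField.lieBracket ℝ (dsDrift m g ρ S δ W₀ CL CD0 K)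
      (VectorField.lieBracket ℝ (dsDrift m g ρ S δ W₀ CL CD0 K)
        (fun _ : Fin 7 → ℝ => ![0, 0, 0, 0, 0, 0, 1])) p 1
      = (1 / 2 * ρ * (p 3) ^ 2 * S * CL / m)
          * (Real.cos (p 6) * Real.cos (p 5)
              + Real.sin (p 4) * Real.sin (p 6) * Real.sin (p 5)) := by
    rw [key 1, hz1, hd1, hv4, hv5, zero_mul, add_zero, zero_sub]
    simp only [zero_mul, add_zero]
    field_simp
    ring
  have E2 : VectorField.lieBracket ℝ (dsDrift m g ρ S δ W₀ CL CD0 K)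
      (VectorField.lieBracket ℝ (dsDrift m g ρ S δ W₀ CL CD0 K)
        (fun _ : Fin 7 → ℝ => ![0, 0, 0, 0, 0, 0, 1])) p 2
      = -(1 / 2 * ρ * (p 3) ^ 2 * S * CL / m) * Real.cos (p 4) * Real.sin (p 6) := by
    rw [key 2, hz2, hd2, hv4, zero_mul, add_zero, zero_sub]
    field_simp
  refine ⟨E0, E1, E2, ?_⟩
  intro hL
  rw [E0, E1, E2]
  intro hcon
  have hq : 1 / 2 * ρ * (p 3) ^ 2 * S * CL / m ≠ 0 := div_ne_zero hL hm'
  have c0 : (1 / 2 * ρ * (p 3) ^ 2 * S * CL / m)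
      * (Real.cos (p 5) * Real.sin (p 4) * Real.sin (p 6)
          - Real.cos (p 6) * Real.sin (p 5)) = 0 := congrFun hcon 0
  have c1 : (1 / 2 * ρ * (p 3) ^ 2 * S * CL / m)
      * (Real.cos (p 6) * Real.cos (p 5)
          + Real.sin (p 4) * Real.sin (p 6) * Real.sin (p 5)) = 0 := congrFun hcon 1
  have c2 : -(1 / 2 * ρ * (p 3) ^ 2 * S * CL / m) * Real.cos (p 4) * Real.sin (p 6) = 0 :=
    congrFun hcon 2
  have hs6 : Real.sin (p 6) = 0 := by
    rcases mul_eq_zero.1 c2 with h' | h'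
    · rcases mul_eq_zero.1 h' with h'' | h''
      · exact absurd h'' (neg_ne_zero.2 hq)
      · exact absurd h'' hγ
    · exact h'
  have hc6 : Real.cos (p 6) ≠ 0 := by
    intro h
    have := Real.sin_sq_add_cos_sq (p 6)
    rw [hs6, h] at this
    norm_num at this
  have hcs : Real.cos (p 6) * Real.sin (p 5) = 0 := by
    rw [hs6] at c0
    rcases mul_eq_zero.1 c0 with h' | h'
    · exact absurd h' hq
    · simpa using h'.symm
  have hcc : Real.cos (p 6) * Real.cos (p 5) = 0 := by
    rw [hs6] at c1
    rcases mul_eq_zero.1 c1 with h' | h'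
    · exact absurd h' hq
    · simpa using h'
  have hs5 : Real.sin (p 5) = 0 := (mul_eq_zero.1 hcs).resolve_left hc6
  have hc5 : Real.cos (p 5) = 0 := (mul_eq_zero.1 hcc).resolve_left hc6
  have := Real.sin_sq_add_cos_sq (p 5)
  rw [hs5, hc5] at this
  norm_num at this
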